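/- Let R be a commutative ring and S a multiplicatively closed subset of R with S ⊆ reg(R). Then the zero ideal of R is an S-n-ideal if and only if the zero ideal is an n-ideal. -/

import Mathlib

/-- `I` is an `S`-`n`-ideal: `I` is disjoint from `S` and there is `s ∈ S` such that
whenever `a * b ∈ I` and `s * a` is not nilpotent, then `s * b ∈ I`. -/
def IsSnIdeal {R : Type*} [CommRing R] (S : Set R) (I : Ideal R) : Prop :=
  Disjoint S (I : Set R) ∧
    ∃ s ∈ S, ∀ a b : R, a * b ∈ I → s * a ∉ nilradical R → s * b ∈ I

/-- `I` is an `n`-ideal: `I` is proper and `a * b ∈ I` with `a` not nilpotent implies `b ∈ I`. -/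
def IsNIdeal {R : Type*} [CommRing R] (I : Ideal R) : Prop :=
  I ≠ ⊤ ∧ ∀ a b : R, a * b ∈ I → a ∉ nilradical R → b ∈ I

/-- `I` is an `S`-prime ideal. -/
def IsSPrime {R : Type*} [CommRing R] (S : Set R) (I : Ideal R) : Prop :=
  Disjoint S (I : Set R) ∧
    ∃ s ∈ S, ∀ a b : R, a * b ∈ I → s * a ∈ I ∨ s * b ∈ I
theorem stmt_3 {R : Type*} [CommRing R] [Nontrivial R] (S : Submonoid R)
    (hreg : (S : Set R) ⊆ {r : R | r ∈ nonZeroDivisors R}) :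
    IsSnIdeal (S : Set R) (⊥ : Ideal R) ↔ IsNIdeal (⊥ : Ideal R) := by
  constructor
  · rintro ⟨hdisj, s, hs, h⟩
    refine ⟨bot_ne_top, fun a b hab ha => ?_⟩
    have hsreg : s ∈ nonZeroDivisors R := hreg hs
    have hsa : s * a ∉ nilradical R := by
      intro hn
      apply ha
      rw [mem_nilradical] at hn ⊢
      obtain ⟨n, hn⟩ := hn
      rw [mul_pow] at hn
      exact ⟨n, (mem_nonZeroDivisors_iff_right.mp (pow_mem hsreg n)) _ (by rwa [mul_comm] at hn)⟩
    have := h a b hab hsa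
    simpa using mem_nonZeroDivisors_iff_right.mp hsreg _ (by simpa [mul_comm] using this)
  · rintro ⟨_, h⟩
    refine ⟨?_, 1, S.one_mem, fun a b hab ha => by
      simpa using h a b hab (by simpa using ha)⟩
    rw [Set.disjoint_right]
    intro x hx hxS
    simp only [SetLike.mem_coe, Ideal.mem_bot] at hx
    subst hx
    exact zero_notMem_nonZeroDivisors (hreg hxS)
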